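/- Let u(t) be a harmonic map flow on a surface with stress-energy bound ‖S(u(t))‖_{L^q} ≤ σ (q ≥ 1) for τ ≤ t < T. Suppose 0 < R ≤ ρ < R₀ and τ ≤ t₁ ≤ t₂ < T satisfy sup_{t₁≤t≤t₂} E(u(t), B_ρ(p)) ≤ E(u(t₂), B_R(p)) + ε/2. Then for t₁ ≤ t ≤ t₂ the outer energy scale satisfies λ_{ε,ρ,p}(u(t)) ≤ max[4R, (Cσ(t₂−t)/ε)^{q/2}]. -/

import Mathlib

/-- Theorem 4.4: estimate on the outer energy scale.  Here
`Eb t r = E(u(t), B_r(p))` denotes the local energy of the flow on the ball of radius `r`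
about `p`, which is monotone in `r`; the energy on the annulus `U^r_{r/2}(p)` is
`Eb t r − Eb t (r/2)`, and the outer energy scale `λ_{ε,ρ,p}(u(t))` is the least
`λ ∈ [0,ρ]` with `sup_{λ<r<ρ} E(u(t), U^r_{r/2}) < ε`.  Assume the `L^q` stress-energy
bound `‖S(u(t))‖_{L^q} ≤ σ` holds, in the form of the local energy growth estimate of
Lemma 4.1 (with constant `c`): `Eb s₂ (R'/2) ≤ Eb s₁ R' + c σ (s₂−s₁) R'^{−2/q}`.  If
`sup_{t₁≤t≤t₂} E(u(t), B_ρ) ≤ E(u(t₂), B_R) + ε/2`, then for `t₁ ≤ t ≤ t₂`,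
`λ_{ε,ρ,p}(u(t)) ≤ max [4R, (Cσ(t₂−t)/ε)^{q/2}]`. -/
theorem stmt11 (q c : ℝ) (hq : 1 ≤ q) (hc : 0 < c) :
    ∃ C > (0 : ℝ), ∀ (σ ε ρ R τ T t₁ t₂ : ℝ) (Eb : ℝ → ℝ → ℝ),
      0 ≤ σ → 0 < ε → 0 < ρ → 0 < R → R ≤ ρ →
      0 ≤ τ → τ ≤ t₁ → t₁ ≤ t₂ → t₂ < T →
      (∀ t, Monotone (Eb t)) → (∀ t r, 0 ≤ Eb t r) →
      (∀ R' : ℝ, 0 < R' → ∀ s₁ s₂, τ ≤ s₁ → s₁ ≤ s₂ → s₂ < T →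
        Eb s₂ (R' / 2) ≤ Eb s₁ R' + c * σ * (s₂ - s₁) * R' ^ (-(2 / q))) →
      (∀ t ∈ Set.Icc t₁ t₂, Eb t ρ ≤ Eb t₂ R + ε / 2) →
      ∀ t ∈ Set.Icc t₁ t₂,
        sInf {l : ℝ | l ∈ Set.Icc 0 ρ ∧
            ∀ r : ℝ, l < r → r < ρ → Eb t r - Eb t (r / 2) < ε} ≤
          max (4 * R) ((C * σ * (t₂ - t) / ε) ^ (q / 2)) := by
  refine ⟨8 * c, by positivity, ?_⟩
  intro σ ε ρ R τ T t₁ t₂ Eb hσ hε hρ hR hRρ hτ hτt₁ ht₁₂ ht₂T hmono hnn hgrow hsup t ht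
  obtain ⟨ht₁, ht₂⟩ := ht
  have hq0 : 0 < q := lt_of_lt_of_le one_pos hq
  set M := max (4 * R) ((8 * c * σ * (t₂ - t) / ε) ^ (q / 2)) with hMdef
  have hbdd : BddBelow {l : ℝ | l ∈ Set.Icc 0 ρ ∧
      ∀ r : ℝ, l < r → r < ρ → Eb t r - Eb t (r / 2) < ε} :=
    ⟨0, fun x hx => hx.1.1⟩
  by_cases hcase : ρ ≤ M
  · refine le_trans (csInf_le hbdd ?_) hcase
    exact ⟨⟨le_of_lt hρ, le_refl ρ⟩, fun r hr hr' => absurd (hr.trans hr') (lt_irrefl ρ)⟩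
  · push_neg at hcase
    apply csInf_le hbdd
    refine ⟨⟨le_trans (by positivity) (le_max_left _ _), le_of_lt hcase⟩, ?_⟩
    intro r hMr hrρ
    have h4R : 4 * R < r := lt_of_le_of_lt (le_max_left _ _) hMr
    have hr0 : 0 < r := lt_trans (by positivity) h4R
    have hgrow' := hgrow (r / 2) (by positivity) t t₂ (le_trans hτt₁ ht₁) ht₂ ht₂T
    have hmonoR : Eb t₂ R ≤ Eb t₂ (r / 2 / 2) := hmono t₂ (by linarith)
    have hmonoρ : Eb t r ≤ Eb t ρ := hmono t (le_of_lt hrρ)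
    have hsupT := hsup t ⟨ht₁, ht₂⟩
    have hkey : c * σ * (t₂ - t) * (r / 2) ^ (-(2 / q)) < ε / 2 := by
      rcases eq_or_lt_of_le (mul_nonneg hσ (by linarith : (0:ℝ) ≤ t₂ - t)) with hP | hP
      · have : c * σ * (t₂ - t) = c * (σ * (t₂ - t)) := by ring
        rw [this, ← hP, mul_zero, zero_mul]
        positivity
      · set P := σ * (t₂ - t) with hPdef
        have hL : (0:ℝ) < 2 * c * P / ε := by positivity
        have h4half : (4:ℝ) ^ ((1:ℝ) / 2) = 2 := by
          rw [← Real.sqrt_eq_rpow, show (4:ℝ) = 2 ^ 2 by norm_num,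
            Real.sqrt_sq (by norm_num : (0:ℝ) ≤ 2)]
        have h4 : (2:ℝ) ≤ (4:ℝ) ^ (q / 2) := by
          have := Real.rpow_le_rpow_of_exponent_le (by norm_num : (1:ℝ) ≤ 4)
            (by linarith : (1:ℝ) / 2 ≤ q / 2)
          rwa [h4half] at this
        have heq : (8 * c * σ * (t₂ - t) / ε) ^ (q / 2)
            = (4:ℝ) ^ (q / 2) * (2 * c * P / ε) ^ (q / 2) := by
          rw [← Real.mul_rpow (by norm_num) (le_of_lt hL)]
          congr 1
          rw [hPdef]; ring
        have hKM : (8 * c * σ * (t₂ - t) / ε) ^ (q / 2) ≤ M := le_max_right _ _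
        have hxnn : (0:ℝ) ≤ (2 * c * P / ε) ^ (q / 2) := Real.rpow_nonneg (le_of_lt hL) _
        have h2x : 2 * (2 * c * P / ε) ^ (q / 2) ≤ M := by
          rw [heq] at hKM
          nlinarith
        have hr2 : (2 * c * P / ε) ^ (q / 2) < r / 2 := by linarith
        have hrp : 2 * c * P / ε < (r / 2) ^ (2 / q) := by
          have h := Real.rpow_lt_rpow hxnn hr2 (by positivity : (0:ℝ) < 2 / q)
          rwa [← Real.rpow_mul (le_of_lt hL), show q / 2 * (2 / q) = (1:ℝ) by field_simp,
            Real.rpow_one] at h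
        have hpow_pos : (0:ℝ) < (r / 2) ^ (2 / q) := Real.rpow_pos_of_pos (by positivity) _
        have hinv : ((r / 2) ^ (2 / q))⁻¹ < (2 * c * P / ε)⁻¹ :=
          inv_strictAnti₀ hL hrp
        have hcP : (0:ℝ) < c * P := by positivity
        calc c * σ * (t₂ - t) * (r / 2) ^ (-(2 / q))
            = (c * P) * ((r / 2) ^ (2 / q))⁻¹ := by
              rw [Real.rpow_neg (by positivity : (0:ℝ) ≤ r / 2), hPdef]; ring
          _ < (c * P) * (2 * c * P / ε)⁻¹ := by
              exact (mul_lt_mul_iff_right₀ hcP).mpr hinv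
          _ = ε / 2 := by field_simp
    linarith
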